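/- Let (𝓜, 𝓒) be a duality pair over a commutative ring R. Then 𝓜 is closed under pure submodules, pure quotients, and pure extensions; that is, for any short exact sequence 0 → A → B → C → 0 of R-modules that remains exact after tensoring with every R-module: (a) if B ∈ 𝓜 then A ∈ 𝓜, (b) if B ∈ 𝓜 then C ∈ 𝓜, and (c) if A ∈ 𝓜 and C ∈ 𝓜 then B ∈ 𝓜. -/

import Mathlib

open CategoryTheory

universe w u

/-- The character module `M⁺ = Hom_ℤ(M, ℚ/ℤ)` of `M`, as an object of `ModuleCat R`
(with the `R`-action `(r • f) x = f (r • x)`). -/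
noncomputable def charMod (R : Type u) [CommRing R] (M : ModuleCat.{u} R) : ModuleCat.{u} R :=
  ModuleCat.of R (CharacterModule M)

/-- `(𝓜, 𝓒)` is a duality pair over `R`: both classes are closed under isomorphism,
`M ∈ 𝓜 ↔ M⁺ ∈ 𝓒`, and `𝓒` is closed under direct summands and finite direct sums. -/
structure IsDualityPair (R : Type u) [CommRing R]
    (Mc Cc : ModuleCat.{u} R → Prop) : Prop where
  isoClosed_fst : ∀ {A B : ModuleCat.{u} R}, (A ≅ B) → Mc A → Mc B
  isoClosed_snd : ∀ {A B : ModuleCat.{u} R}, (A ≅ B) → Cc A → Cc B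
  char_mem_iff : ∀ M : ModuleCat.{u} R, Mc M ↔ Cc (charMod R M)
  summand_closed : ∀ A B : ModuleCat.{u} R, Cc (ModuleCat.of R (A × B)) → Cc A
  finSum_closed : ∀ A B : ModuleCat.{u} R, Cc A → Cc B → Cc (ModuleCat.of R (A × B))



section Aux
variable {R : Type u} [CommRing R]
variable {A B C : Type u} [AddCommGroup A] [AddCommGroup B] [AddCommGroup C]
variable [Module R A] [Module R B] [Module R C]

/-- The character dual of a surjection is injective. -/
lemma dual_injective_of_surjective (g : B →ₗ[R] C) (hg : Function.Surjective g) :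
    Function.Injective (CharacterModule.dual g) := by
  rw [injective_iff_map_eq_zero]
  intro c hc
  ext x
  obtain ⟨b, rfl⟩ := hg x
  exact DFunLike.congr_fun hc b

/-- The character dual of an exact sequence (surjective at the right) is exact. -/
lemma dual_exact (f : A →ₗ[R] B) (g : B →ₗ[R] C) (hg : Function.Surjective g)
    (hfg : Function.Exact f g) :
    Function.Exact (CharacterModule.dual g) (CharacterModule.dual (R := R) f) := by
  intro c
  constructor
  · intro hc
    have hcf : ∀ a, c (f a) = 0 := fun a => DFunLike.congr_fun hc a
    have key : ∀ b b', g b = g b' → c b = c b' := by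
      intro b b' hbb
      have h0 : g (b - b') = 0 := by rw [map_sub, hbb, sub_self]
      obtain ⟨a, ha⟩ := (hfg (b - b')).mp h0
      have : c (b - b') = 0 := by rw [← ha]; exact hcf a
      rw [map_sub, sub_eq_zero] at this
      exact this
    refine ⟨AddMonoidHom.mk' (fun x => c (Function.surjInv hg x)) ?_, ?_⟩
    · intro x y
      rw [← map_add]
      exact key _ _ (by simp [Function.surjInv_eq hg, map_add])
    · ext b
      exact key _ _ (Function.surjInv_eq hg (g b))
  · rintro ⟨d, rfl⟩
    ext a
    have : g (f a) = 0 := (hfg (f a)).mpr ⟨a, rfl⟩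
    simp only [CharacterModule.dual_apply]
    show d (g (f a)) = 0
    rw [this, map_zero]
end Aux

section DualityAux
variable {R : Type u} [CommRing R]
variable {A B C : Type u} [AddCommGroup A] [AddCommGroup B] [AddCommGroup C]
variable [Module R A] [Module R B] [Module R C]

/-- If `A ⊗ f` stays injective after tensoring with `A⁺`, then `dual f : B⁺ → A⁺` has a
section. -/
lemma dual_has_section (f : A →ₗ[R] B)
    (hinj : Function.Injective (LinearMap.lTensor (CharacterModule A) f)) :
    ∃ s : CharacterModule A →ₗ[R] CharacterModule B,
      (CharacterModule.dual (R := R) f) ∘ₗ s = LinearMap.id := by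
  obtain ⟨Φ, hΦ⟩ := CharacterModule.dual_surjective_of_injective
    (LinearMap.lTensor (CharacterModule A) f) hinj
    (CharacterModule.uncurry (LinearMap.id (R := R) (M := CharacterModule A)))
  refine ⟨CharacterModule.curry Φ, ?_⟩
  ext x a
  have h1 : (CharacterModule.dual (LinearMap.lTensor (CharacterModule A) f) Φ)
      (x ⊗ₜ[R] a) = CharacterModule.uncurry LinearMap.id (x ⊗ₜ[R] a) := by rw [hΦ]
  exact h1

end DualityAux

/-- If `(𝓜, 𝓒)` is a duality pair over a commutative ring `R`, then `𝓜` is closed under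
pure submodules, pure quotients and pure extensions. -/
theorem duality_pair_closed_under_purity
    (R : Type u) [CommRing R] (Mc Cc : ModuleCat.{u} R → Prop)
    (h : IsDualityPair R Mc Cc)
    (A B C : ModuleCat.{u} R) (f : A →ₗ[R] B) (g : B →ₗ[R] C)
    (hf : Function.Injective f) (hg : Function.Surjective g)
    (hfg : Function.Exact f g)
    (hpure : ∀ (E : Type u) [AddCommGroup E] [Module R E],
      Function.Injective (LinearMap.lTensor E f) ∧
      Function.Exact (LinearMap.lTensor E f) (LinearMap.lTensor E g) ∧
      Function.Surjective (LinearMap.lTensor E g)) :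
    (Mc B → Mc A) ∧ (Mc B → Mc C) ∧ (Mc A → Mc C → Mc B) := by
  
  -- The dual sequence 0 → C⁺ → B⁺ → A⁺ → 0 is exact:
  have hdg_inj : Function.Injective (CharacterModule.dual (R := R) g) :=
    dual_injective_of_surjective g hg
  have hexact : Function.Exact (CharacterModule.dual (R := R) g)
      (CharacterModule.dual (R := R) f) := dual_exact f g hg hfg
  -- By purity (with E = A⁺) the dual sequence splits:
  obtain ⟨s, hs⟩ := dual_has_section f (hpure (CharacterModule A)).1
  -- hence B⁺ ≅ C⁺ × A⁺:
  obtain ⟨e, -, -⟩ := hexact.splitSurjectiveEquiv hdg_inj ⟨s, hs⟩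
  have iso1 : charMod R B ≅ ModuleCat.of R (↑(charMod R C) × ↑(charMod R A)) :=
    e.toModuleIso
  have iso2 : ModuleCat.of R (↑(charMod R C) × ↑(charMod R A)) ≅
      ModuleCat.of R (↑(charMod R A) × ↑(charMod R C)) :=
    (LinearEquiv.prodComm R (CharacterModule C) (CharacterModule A)).toModuleIso
  refine ⟨?_, ?_, ?_⟩
  · intro hB
    have h1 : Cc (charMod R B) := (h.char_mem_iff B).mp hB
    have h2 : Cc (ModuleCat.of R (↑(charMod R A) × ↑(charMod R C))) :=
      h.isoClosed_snd iso2 (h.isoClosed_snd iso1 h1)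
    exact (h.char_mem_iff A).mpr (h.summand_closed (charMod R A) (charMod R C) h2)
  · intro hB
    have h1 : Cc (charMod R B) := (h.char_mem_iff B).mp hB
    exact (h.char_mem_iff C).mpr
      (h.summand_closed (charMod R C) (charMod R A) (h.isoClosed_snd iso1 h1))
  · intro hA hC
    have h1 : Cc (ModuleCat.of R (↑(charMod R C) × ↑(charMod R A))) :=
      h.finSum_closed (charMod R C) (charMod R A)
        ((h.char_mem_iff C).mp hC) ((h.char_mem_iff A).mp hA)
    exact (h.char_mem_iff B).mpr (h.isoClosed_snd iso1.symm h1)
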